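/- In the abstract quadratic setting, let Φ : X → ℝ be C¹ and suppose there exist C > 0 and p > 2 such that |⟨Φ′(z), z₂ − z₁⟩| ≤ C‖z‖^p for every z = z₁ + z₂ ∈ X with z₁ ∈ X⁻, z₂ ∈ X⁺. Set ν = min{α − 1, 1 − β}, ρ = (ν/(2C))^{1/(p−2)}, and for t ∈ [0,1] define J_t = Q − tΦ. Then for every t ∈ [0,1] and every z ∈ X with ‖z‖ ≤ ρ one has ⟨J_t′(z), z₂ − z₁⟩ ≥ (ν/2)‖z‖²; consequently, for every t ∈ [0,1], the origin is the only critical point of J_t in the closed ball {z ∈ X : ‖z‖ ≤ ρ}. -/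

import Mathlib

open scoped RealInnerProductSpace

lemma fderivJ_apply {X : Type*} [NormedAddCommGroup X] [InnerProductSpace ℝ X]
    (b : X →L[ℝ] X →L[ℝ] ℝ) (hsymm : ∀ z w : X, b z w = b w z)
    (Φ : X → ℝ) (hΦ : ContDiff ℝ 1 Φ) (t : ℝ) (z v : X) :
    fderiv ℝ (fun w => 1 / 2 * ‖w‖ ^ 2 - 1 / 2 * b w w - t * Φ w) z v =
      ⟪z, v⟫ - b z v - t * fderiv ℝ Φ z v := by
  have hn : HasFDerivAt (fun w : X => ‖w‖ ^ 2) (2 • (innerSL ℝ z)) z := by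
    simpa using (hasFDerivAt_id z).norm_sq
  have hdiag : HasFDerivAt (fun w : X => (w, w))
      ((ContinuousLinearMap.id ℝ X).prod (ContinuousLinearMap.id ℝ X)) z :=
    (hasFDerivAt_id z).prodMk (hasFDerivAt_id z)
  have hbb' := (b.isBoundedBilinearMap.hasFDerivAt (z, z)).comp
      (f := fun w : X => (w, w)) z hdiag
  have hbb : HasFDerivAt (fun w : X => b w w)
      ((b.isBoundedBilinearMap.deriv (z, z)).comp
        ((ContinuousLinearMap.id ℝ X).prod (ContinuousLinearMap.id ℝ X))) z := hbb'
  have hΦ' := (hΦ.differentiable one_ne_zero z).hasFDerivAt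
  have h := ((hn.const_mul (1/2 : ℝ)).sub (hbb.const_mul (1/2 : ℝ))).sub (hΦ'.const_mul t)
  rw [HasFDerivAt.fderiv (f := fun w : X => 1 / 2 * ‖w‖ ^ 2 - 1 / 2 * b w w - t * Φ w) h]
  simp only [ContinuousLinearMap.sub_apply, ContinuousLinearMap.smul_apply,
    ContinuousLinearMap.comp_apply, ContinuousLinearMap.prod_apply,
    ContinuousLinearMap.coe_id', id_eq, IsBoundedBilinearMap.deriv_apply,
    innerSL_apply_apply, smul_eq_mul]
  rw [hsymm v z]; ring


/-- In the abstract quadratic setting, if `Φ` is `C¹` with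
`|⟨Φ′(z), z₂ − z₁⟩| ≤ C‖z‖^p` (`C > 0`, `p > 2`), then with
`ν = min{α−1, 1−β}` and `ρ = (ν/(2C))^(1/(p−2))`, for every `t ∈ [0,1]` and every
`z = z₁ + z₂` with `‖z‖ ≤ ρ` one has `⟨J_t′(z), z₂ − z₁⟩ ≥ (ν/2)‖z‖²`, where
`J_t = Q − tΦ`; consequently the origin is the only critical point of `J_t`
in the closed ball of radius `ρ`. -/
theorem stmt_8 {X : Type*} [NormedAddCommGroup X] [InnerProductSpace ℝ X] [CompleteSpace X]
    (Xm : Submodule ℝ X) (hXm : IsClosed (Xm : Set X))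
    (b : X →L[ℝ] X →L[ℝ] ℝ)
    (hsymm : ∀ z w : X, b z w = b w z)
    (horth : ∀ z₁ ∈ Xm, ∀ z₂ ∈ Xmᗮ, b z₁ z₂ = 0)
    (α β : ℝ) (hα : 1 < α) (hβ : β < 1)
    (hbm : ∀ z₁ ∈ Xm, α * ‖z₁‖ ^ 2 ≤ b z₁ z₁)
    (hbp : ∀ z₂ ∈ Xmᗮ, b z₂ z₂ ≤ β * ‖z₂‖ ^ 2)
    (Q : X → ℝ) (hQ : ∀ z, Q z = 1 / 2 * ‖z‖ ^ 2 - 1 / 2 * b z z)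
    (Φ : X → ℝ) (hΦ : ContDiff ℝ 1 Φ)
    (C p : ℝ) (hC : 0 < C) (hp : 2 < p)
    (hbound : ∀ z₁ ∈ Xm, ∀ z₂ ∈ Xmᗮ,
      |fderiv ℝ Φ (z₁ + z₂) (z₂ - z₁)| ≤ C * ‖z₁ + z₂‖ ^ p)
    (ν ρ : ℝ) (hν : ν = min (α - 1) (1 - β))
    (hρ : ρ = (ν / (2 * C)) ^ (1 / (p - 2))) :
    (∀ t ∈ Set.Icc (0 : ℝ) 1, ∀ z₁ ∈ Xm, ∀ z₂ ∈ Xmᗮ, ‖z₁ + z₂‖ ≤ ρ →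
        ν / 2 * ‖z₁ + z₂‖ ^ 2 ≤
          fderiv ℝ (fun w => Q w - t * Φ w) (z₁ + z₂) (z₂ - z₁)) ∧
    (∀ t ∈ Set.Icc (0 : ℝ) 1, ∀ z : X, ‖z‖ ≤ ρ →
        fderiv ℝ (fun w => Q w - t * Φ w) z = 0 → z = 0) := by
  have hν0 : 0 < ν := by rw [hν]; exact lt_min (by linarith) (by linarith)
  have hν1 : ν ≤ α - 1 := hν ▸ min_le_left _ _
  have hν2 : ν ≤ 1 - β := hν ▸ min_le_right _ _
  have key : ∀ t ∈ Set.Icc (0 : ℝ) 1, ∀ z₁ ∈ Xm, ∀ z₂ ∈ Xmᗮ, ‖z₁ + z₂‖ ≤ ρ →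
      ν / 2 * ‖z₁ + z₂‖ ^ 2 ≤
        fderiv ℝ (fun w => Q w - t * Φ w) (z₁ + z₂) (z₂ - z₁) := by
    intro t ht z₁ h₁ z₂ h₂ hz
    have hfun : (fun w => Q w - t * Φ w)
        = fun w => 1 / 2 * ‖w‖ ^ 2 - 1 / 2 * b w w - t * Φ w := by
      funext w; rw [hQ]
    rw [hfun, fderivJ_apply b hsymm Φ hΦ]
    have hio : ⟪z₁, z₂⟫ = 0 := Submodule.inner_right_of_mem_orthogonal h₁ h₂
    have hio' : ⟪z₂, z₁⟫ = 0 := by rw [real_inner_comm]; exact hio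
    have hinner : ⟪z₁ + z₂, z₂ - z₁⟫ = ‖z₂‖ ^ 2 - ‖z₁‖ ^ 2 := by
      simp [inner_add_left, inner_sub_right, hio, hio',
        real_inner_self_eq_norm_sq]
    have hnorm : ‖z₁ + z₂‖ ^ 2 = ‖z₁‖ ^ 2 + ‖z₂‖ ^ 2 := by
      rw [norm_add_sq_real, hio]; ring
    have hb : b (z₁ + z₂) (z₂ - z₁) = b z₂ z₂ - b z₁ z₁ := by
      have h21 : b z₂ z₁ = 0 := by rw [hsymm]; exact horth z₁ h₁ z₂ h₂
      simp [map_add, map_sub, horth z₁ h₁ z₂ h₂, h21]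
    have hQpart : ν * ‖z₁ + z₂‖ ^ 2 ≤ ⟪z₁ + z₂, z₂ - z₁⟫ - b (z₁ + z₂) (z₂ - z₁) := by
      rw [hinner, hb, hnorm]
      have h1 := hbm z₁ h₁
      have h2 := hbp z₂ h₂
      have s1 : 0 ≤ ‖z₁‖ ^ 2 := sq_nonneg _
      have s2 : 0 ≤ ‖z₂‖ ^ 2 := sq_nonneg _
      nlinarith [mul_le_mul_of_nonneg_right hν1 s1, mul_le_mul_of_nonneg_right hν2 s2]
    have hΦpart : |t * fderiv ℝ Φ (z₁ + z₂) (z₂ - z₁)| ≤ ν / 2 * ‖z₁ + z₂‖ ^ 2 := by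
      rw [abs_mul]
      have htabs : |t| ≤ 1 := abs_le.2 ⟨by linarith [ht.1], ht.2⟩
      have hb2 := hbound z₁ h₁ z₂ h₂
      have habs : |fderiv ℝ Φ (z₁ + z₂) (z₂ - z₁)| ≤ ν / 2 * ‖z₁ + z₂‖ ^ 2 := by
        refine hb2.trans ?_
        rcases eq_or_lt_of_le (norm_nonneg (z₁ + z₂)) with h0 | h0
        · rw [← h0, Real.zero_rpow (by positivity)]
          simp
        · have hrad : (0:ℝ) ≤ ν / (2 * C) := by positivity
          have hρp : ρ ^ (p - 2) = ν / (2 * C) := by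
            rw [hρ, ← Real.rpow_mul hrad, one_div,
              inv_mul_cancel₀ (by intro h; rw [sub_eq_zero] at h; linarith : p - 2 ≠ 0),
              Real.rpow_one]
          have hle : ‖z₁ + z₂‖ ^ (p - 2) ≤ ν / (2 * C) := by
            rw [← hρp]
            exact Real.rpow_le_rpow (norm_nonneg _) hz (by linarith)
          have hsplit : ‖z₁ + z₂‖ ^ p = ‖z₁ + z₂‖ ^ (p - 2) * ‖z₁ + z₂‖ ^ (2:ℕ) := by
            rw [← Real.rpow_natCast _ 2, ← Real.rpow_add h0]
            norm_num
          rw [hsplit]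
          calc C * (‖z₁ + z₂‖ ^ (p - 2) * ‖z₁ + z₂‖ ^ (2:ℕ))
              ≤ C * (ν / (2 * C) * ‖z₁ + z₂‖ ^ (2:ℕ)) := by
                apply mul_le_mul_of_nonneg_left _ hC.le
                exact mul_le_mul_of_nonneg_right hle (by positivity)
            _ = ν / 2 * ‖z₁ + z₂‖ ^ 2 := by field_simp
      calc |t| * |fderiv ℝ Φ (z₁ + z₂) (z₂ - z₁)|
          ≤ 1 * (ν / 2 * ‖z₁ + z₂‖ ^ 2) :=
            mul_le_mul htabs habs (abs_nonneg _) one_pos.le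
        _ = ν / 2 * ‖z₁ + z₂‖ ^ 2 := one_mul _
    have := abs_le.1 hΦpart
    nlinarith [hQpart, this.2]
  refine ⟨key, ?_⟩
  intro t ht z hz hcrit
  haveI := hXm.completeSpace_coe
  obtain ⟨y, hy, w, hw, rfl⟩ := Xm.exists_add_mem_mem_orthogonal z
  have hk := key t ht y hy w hw hz
  rw [hcrit] at hk
  simp only [ContinuousLinearMap.zero_apply] at hk
  have : ‖y + w‖ ^ 2 ≤ 0 := by nlinarith
  have h0 : ‖y + w‖ = 0 := by nlinarith [norm_nonneg (y + w), sq_nonneg (‖y + w‖)]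
  exact norm_eq_zero.1 h0
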